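/- The symmetric part of the n×n matrix ΦᵀD(γP − I)Φ is negative definite, i.e., ΦᵀD(γP − I)Φ + Φᵀ(γP − I)ᵀDΦ ≺ 0; consequently ΦᵀD(γP − I)Φ is invertible. -/

import Mathlib

open Matrix BigOperators

lemma phi_mulVec_injective {N n : ℕ} (Φ : Matrix (Fin N) (Fin n) ℝ)
    (hΦ : Φ.rank = n) : Function.Injective Φ.mulVec := by
  have h1 : Module.finrank ℝ (LinearMap.range Φ.mulVecLin)
      + Module.finrank ℝ (LinearMap.ker Φ.mulVecLin)
      = Module.finrank ℝ (Fin n → ℝ) :=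
    LinearMap.finrank_range_add_finrank_ker _
  have h2 : Module.finrank ℝ (Fin n → ℝ) = n := by
    exact Module.finrank_fin_fun ℝ
  rw [h2] at h1
  have hr : Module.finrank ℝ (LinearMap.range Φ.mulVecLin) = n := hΦ
  have hker : Module.finrank ℝ (LinearMap.ker Φ.mulVecLin) = 0 := by omega
  have : LinearMap.ker Φ.mulVecLin = ⊥ := Submodule.finrank_eq_zero.mp hker
  have := LinearMap.ker_eq_bot.mp this
  exact this

lemma key_sum_ineq {N : ℕ} (P : Matrix (Fin N) (Fin N) ℝ) (d : Fin N → ℝ)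
    (hPnonneg : ∀ i j, 0 ≤ P i j)
    (hProw : ∀ i, ∑ j, P i j = 1)
    (hdpos : ∀ s, 0 < d s)
    (hstat : Matrix.vecMul d P = d)
    (y : Fin N → ℝ) :
    ∑ s, d s * (y s * (P.mulVec y) s) ≤ ∑ s, d s * (y s)^2 := by
  have expand : ∑ s, d s * (y s * (P.mulVec y) s)
      = ∑ s, ∑ t, d s * P s t * (y s * y t) := by
    refine Finset.sum_congr rfl fun s _ => ?_
    simp only [Matrix.mulVec, dotProduct, Finset.mul_sum]
    exact Finset.sum_congr rfl fun t _ => by ring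
  rw [expand]
  have step : 2 * ∑ s, ∑ t, d s * P s t * (y s * y t)
      ≤ ∑ s, ∑ t, (d s * P s t * (y s)^2 + d s * P s t * (y t)^2) := by
    rw [Finset.mul_sum]
    simp_rw [Finset.mul_sum]
    refine Finset.sum_le_sum fun s _ => Finset.sum_le_sum fun t _ => ?_
    nlinarith [sq_nonneg (y s - y t), mul_nonneg (hdpos s).le (hPnonneg s t)]
  have split : ∑ s, ∑ t, (d s * P s t * (y s)^2 + d s * P s t * (y t)^2)
      = (∑ s, ∑ t, d s * P s t * (y s)^2) + ∑ s, ∑ t, d s * P s t * (y t)^2 := by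
    rw [← Finset.sum_add_distrib]
    exact Finset.sum_congr rfl fun s _ => Finset.sum_add_distrib
  have e2 : ∑ s, ∑ t, d s * P s t * (y s)^2 = ∑ s, d s * (y s)^2 := by
    refine Finset.sum_congr rfl fun s _ => ?_
    rw [← Finset.sum_mul, ← Finset.mul_sum, hProw s]
    ring
  have e3 : ∑ s, ∑ t, d s * P s t * (y t)^2 = ∑ s, d s * (y s)^2 := by
    rw [Finset.sum_comm]
    refine Finset.sum_congr rfl fun t _ => ?_
    have : ∑ s, d s * P s t * (y t)^2 = (∑ s, d s * P s t) * (y t)^2 := by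
      rw [Finset.sum_mul]
    rw [this]
    have : ∑ s, d s * P s t = d t := by
      have := congrFun hstat t
      simpa [Matrix.vecMul, dotProduct] using this
    rw [this]
  rw [split, e2, e3] at step; linarith

/-- The symmetric part of the `n×n` matrix `ΦᵀD(γP − I)Φ` is
negative definite, i.e. `ΦᵀD(γP − I)Φ + Φᵀ(γP − I)ᵀDΦ ≺ 0`; consequently
`ΦᵀD(γP − I)Φ` is invertible. -/
theorem td_matrix_symmetric_part_negative_definite
    (N n : ℕ) (hN : 0 < N) (hn : 0 < n) (hnN : n ≤ N)
    (P : Matrix (Fin N) (Fin N) ℝ) (d : Fin N → ℝ) (γ : ℝ)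
    (Φ : Matrix (Fin N) (Fin n) ℝ)
    (hPnonneg : ∀ i j, 0 ≤ P i j)
    (hProw : ∀ i, ∑ j, P i j = 1)
    (hdpos : ∀ s, 0 < d s)
    (hdsum : ∑ s, d s = 1)
    (hstat : Matrix.vecMul d P = d)
    (hγ0 : 0 < γ) (hγ1 : γ < 1)
    (hΦ : Φ.rank = n) :
    let D : Matrix (Fin N) (Fin N) ℝ := Matrix.diagonal d
    let M : Matrix (Fin n) (Fin n) ℝ := Φᵀ * D * (γ • P - 1) * Φ
    (∀ x : Fin n → ℝ, x ≠ 0 → x ⬝ᵥ (M + Mᵀ).mulVec x < 0) ∧ IsUnit M := by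
  intro D M
  -- quadratic form identity
  have hquad : ∀ x : Fin n → ℝ, x ⬝ᵥ M.mulVec x
      = γ * ∑ s, d s * ((Φ.mulVec x) s * (P.mulVec (Φ.mulVec x)) s)
        - ∑ s, d s * ((Φ.mulVec x) s)^2 := by
    intro x
    set y := Φ.mulVec x with hy
    have h1 : M.mulVec x = Φᵀ.mulVec ((D * (γ • P - 1)).mulVec y) := by
      simp only [M, hy, ← Matrix.mulVec_mulVec, Matrix.mul_assoc]
    rw [h1, Matrix.dotProduct_mulVec, Matrix.vecMul_transpose, ← hy,
      ← Matrix.mulVec_mulVec]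
    have h2 : (γ • P - 1).mulVec y = fun s => γ * (P.mulVec y) s - y s := by
      funext s
      simp [Matrix.sub_mulVec, Matrix.smul_mulVec]
    rw [h2]
    have h3 : D.mulVec (fun s => γ * (P.mulVec y) s - y s)
        = fun s => d s * (γ * (P.mulVec y) s - y s) := by
      funext s
      simp [D, Matrix.mulVec_diagonal]
    rw [h3]
    simp only [dotProduct, Finset.mul_sum, ← Finset.sum_sub_distrib]
    refine Finset.sum_congr rfl fun s _ => ?_
    ring
  have hneg : ∀ x : Fin n → ℝ, x ≠ 0 → x ⬝ᵥ M.mulVec x < 0 := by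
    intro x hx
    set y := Φ.mulVec x with hy
    have hy0 : y ≠ 0 := by
      intro h
      apply hx
      have hinj := phi_mulVec_injective Φ hΦ
      have : Φ.mulVec x = Φ.mulVec 0 := by simpa [Matrix.mulVec_zero] using h
      exact hinj this
    have hDy : 0 < ∑ s, d s * (y s)^2 := by
      obtain ⟨s, hs⟩ := Function.ne_iff.mp hy0
      refine Finset.sum_pos' (fun t _ => mul_nonneg (hdpos t).le (sq_nonneg _)) ⟨s, Finset.mem_univ s, ?_⟩
      exact mul_pos (hdpos s) (by
        have := sq_nonneg (y s)
        rcases this.lt_or_eq with h | h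
        · exact h
        · exact absurd (pow_eq_zero_iff (n := 2) (by norm_num) |>.mp h.symm) hs)
    have hk := key_sum_ineq P d hPnonneg hProw hdpos hstat y
    have := hquad x
    rw [this]
    have : γ * ∑ s, d s * (y s * (P.mulVec y) s) ≤ γ * ∑ s, d s * (y s)^2 :=
      mul_le_mul_of_nonneg_left hk hγ0.le
    nlinarith
  constructor
  · intro x hx
    have hsymm : x ⬝ᵥ Mᵀ.mulVec x = x ⬝ᵥ M.mulVec x := by
      rw [Matrix.dotProduct_mulVec, Matrix.vecMul_transpose, dotProduct_comm,
        Matrix.dotProduct_mulVec]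
    rw [Matrix.add_mulVec, dotProduct_add, hsymm]
    have := hneg x hx
    linarith
  · rw [← Matrix.mulVec_injective_iff_isUnit]
    intro a b hab
    by_contra hne
    have hx : a - b ≠ 0 := sub_ne_zero.mpr hne
    have h0 : M.mulVec (a - b) = 0 := by
      rw [Matrix.mulVec_sub, hab, sub_self]
    have := hneg (a - b) hx
    rw [h0] at this
    simp at this
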